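/- Let q be an odd prime power and σ : F_q → F_q a permutation. Then for every j ∈ F_q, there exist distinct i, k ∈ F_q, both different from j, such that the three points (j, σ(j)), (i, σ(i)), (k, σ(k)) are collinear in F_q². That is, no point of the graph of σ is isolated in the hypergraph of collinear triples. -/

import Mathlib

open Finset

theorem wilson_field {F : Type*} [Field F] [Fintype F] [DecidableEq F] :
    ∏ x ∈ (univ : Finset F).erase 0, x = -1 := by
  have h1 : ∏ x : Fˣ, (x : F) = -1 := by
    have := FiniteField.prod_univ_units_id_eq_neg_one (K := F)
    calc ∏ x : Fˣ, (x : F) = ((∏ x : Fˣ, x : Fˣ) : F) := by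
          rw [← Units.coeHom_apply, map_prod]; rfl
      _ = -1 := by rw [this]; simp
  rw [← h1]
  apply Finset.prod_nbij' (fun x => if h : x = (0:F) then 1 else Units.mk0 x h) (fun u => (u : F))
  · intro a ha; simp
  · intro u hu; simp [Units.ne_zero]
  · intro a ha
    have : a ≠ 0 := (Finset.mem_erase.mp ha).1
    simp [this]
  · intro u hu; simp [Units.ne_zero]
  · intro a ha
    have : a ≠ 0 := (Finset.mem_erase.mp ha).1
    simp [this]

theorem no_isolated_point {F : Type*} [Field F] [Fintype F]
    (hq : Odd (Fintype.card F)) (σ : Equiv.Perm F) (j : F) :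
    ∃ i k : F, i ≠ k ∧ i ≠ j ∧ k ≠ j ∧
      (σ i - σ j) * (k - j) = (σ k - σ j) * (i - j) := by
  classical
  by_contra h
  push_neg at h
  set S : Finset F := (univ : Finset F).erase j with hS
  set T : Finset F := (univ : Finset F).erase 0 with hT
  set f : F → F := fun i => (σ i - σ j) * (i - j)⁻¹ with hf
  have hsub : ∀ i ∈ S, i - j ≠ 0 := by
    intro i hi
    have : i ≠ j := (Finset.mem_erase.mp hi).1
    exact sub_ne_zero.mpr this
  have hinj : Set.InjOn f S := by
    intro a ha b hb hab
    by_contra hne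
    have haj : a ≠ j := (Finset.mem_erase.mp ha).1
    have hbj : b ≠ j := (Finset.mem_erase.mp hb).1
    apply h a b hne haj hbj
    have h1 := hsub a ha
    have h2 := hsub b hb
    simp only [hf] at hab
    field_simp at hab
    linear_combination hab
  have hmaps : ∀ i ∈ S, f i ∈ T := by
    intro i hi
    have hij : i ≠ j := (Finset.mem_erase.mp hi).1
    have h1 : σ i - σ j ≠ 0 := sub_ne_zero.mpr (fun hc => hij (σ.injective hc))
    have h2 : (i - j)⁻¹ ≠ 0 := inv_ne_zero (hsub i hi)
    exact Finset.mem_erase.mpr ⟨mul_ne_zero h1 h2, mem_univ _⟩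
  have hcard : S.card = T.card := by
    simp [hS, hT]
  have himg : S.image f = T := by
    apply Finset.eq_of_subset_of_card_le
    · intro x hx
      obtain ⟨a, ha, rfl⟩ := Finset.mem_image.mp hx
      exact hmaps a ha
    · rw [Finset.card_image_of_injOn hinj, hcard]
  have hprodf : ∏ i ∈ S, f i = ∏ x ∈ T, x := by
    rw [← himg, Finset.prod_image (fun a ha b hb => hinj ha hb)]
  -- products of numerators and denominators
  have hden : ∏ i ∈ S, (i - j) = ∏ x ∈ T, x := by
    apply Finset.prod_nbij' (fun i => i - j) (fun x => x + j)
    · intro a ha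
      exact Finset.mem_erase.mpr ⟨hsub a ha, mem_univ _⟩
    · intro x hx
      have : x ≠ 0 := (Finset.mem_erase.mp hx).1
      refine Finset.mem_erase.mpr ⟨?_, mem_univ _⟩
      intro hc; exact this (add_eq_right.mp hc)
    · intro a _; ring
    · intro x _; ring
    · intro a _; rfl
  have hnum : ∏ i ∈ S, (σ i - σ j) = ∏ x ∈ T, x := by
    apply Finset.prod_nbij' (fun i => σ i - σ j) (fun x => σ.symm (x + σ j))
    · intro a ha
      have hij : a ≠ j := (Finset.mem_erase.mp ha).1
      exact Finset.mem_erase.mpr ⟨sub_ne_zero.mpr (fun hc => hij (σ.injective hc)), mem_univ _⟩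
    · intro x hx
      have hx0 : x ≠ 0 := (Finset.mem_erase.mp hx).1
      refine Finset.mem_erase.mpr ⟨?_, mem_univ _⟩
      intro hc
      apply hx0
      have : σ (σ.symm (x + σ j)) = σ j := by rw [hc]
      rw [Equiv.apply_symm_apply] at this
      exact add_eq_right.mp this
    · intro a ha; simp
    · intro x hx; simp
    · intro a ha; rfl
  have hW : ∏ x ∈ T, (x : F) = -1 := wilson_field
  have hone : (∏ x ∈ T, (x : F)) = 1 := by
    have : ∏ i ∈ S, f i = (∏ i ∈ S, (σ i - σ j)) * (∏ i ∈ S, (i - j))⁻¹ := by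
      rw [hf, Finset.prod_mul_distrib, ← Finset.prod_inv_distrib]
    rw [hprodf, hnum, hden, hW] at this
    rw [hW]; rw [this]; simp
  rw [hW] at hone
  have : ringChar F = 2 := neg_one_eq_one_iff.mp hone
  have h2 := FiniteField.even_card_of_char_two this
  obtain ⟨m, hm⟩ := hq
  omega
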